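/- arXiv:2102.03937 — 3 statements merged into one kernel-verified Lean document; each statement's English description precedes it below -/
import Mathlib

section
/- If there are no always takers, i.e. P(D(0) = 1) = 0, and no defiers, then the treatment-on-the-treated parameter equals the LATE: E[Y(1) − Y(0) | D = 1] = E[Y(1) − Y(0) | C], where D = D(1)·A + D(0)·(1 − A), provided A is independent of (Y(1), Y(0), D(0), D(1)) and P(D = 1) > 0. -/
open MeasureTheory ProbabilityTheory

theorem stmt10 {Ω : Type*} [MeasurableSpace Ω] (μ : Measure Ω) [IsProbabilityMeasure μ]
    (A D0 D1 : Ω → Bool) (Y1 Y0 : Ω → ℝ)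
    (hA : Measurable A) (hD0 : Measurable D0) (hD1 : Measurable D1)
    (hY1 : Integrable Y1 μ) (hY0 : Integrable Y0 μ)
    (hindep : IndepFun A (fun ω => (Y1 ω, Y0 ω, D0 ω, D1 ω)) μ)
    (hAT : μ {ω | D0 ω = true} = 0)
    (hdef : μ {ω | D0 ω = true ∧ D1 ω = false} = 0)
    (hDpos : 0 < μ {ω | (if A ω then D1 ω else D0 ω) = true}) :
    ∫ ω, (Y1 ω - Y0 ω) ∂(μ[|{ω | (if A ω then D1 ω else D0 ω) = true}])
      = ∫ ω, (Y1 ω - Y0 ω) ∂(μ[|{ω | D0 ω = false ∧ D1 ω = true}]) := by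
  set S : Set Ω := {ω | (if A ω then D1 ω else D0 ω) = true} with hS
  set B : Set Ω := {ω | D1 ω = true} with hB
  set Ae : Set Ω := {ω | A ω = true} with hAe
  set C : Set Ω := {ω | D0 ω = false ∧ D1 ω = true} with hC
  have h0 : ∀ᵐ ω ∂μ, D0 ω = false := by
    rw [ae_iff]
    convert hAT using 2
    ext ω; simp
  have hSeq : S =ᵐ[μ] ((Ae ∩ B : Set Ω)) := by
    rw [Filter.eventuallyEq_set]
    filter_upwards [h0] with ω hω
    cases hAω : A ω <;> simp [hS, hAe, hB, hAω, hω]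
  have hCeq : C =ᵐ[μ] B := by
    rw [Filter.eventuallyEq_set]
    filter_upwards [h0] with ω hω
    simp [hC, hB, hω]
  have hcondS : μ[|S] = μ[|Ae ∩ B] := by
    unfold ProbabilityTheory.cond
    rw [Measure.restrict_congr_set hSeq, measure_congr hSeq]
  have hcondC : μ[|C] = μ[|B] := by
    unfold ProbabilityTheory.cond
    rw [Measure.restrict_congr_set hCeq, measure_congr hCeq]
  rw [hcondS, hcondC]
  -- independence: μ (Ae ∩ B) = μ Ae * μ B
  have hmul : μ (Ae ∩ B) = μ Ae * μ B := by
    have := hindep.measure_inter_preimage_eq_mul {true}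
      {p : ℝ × ℝ × Bool × Bool | p.2.2.2 = true} (by simp)
      (measurable_snd.snd.snd (measurableSet_singleton true))
    simpa [hAe, hB, Set.preimage] using this
  have hpos : 0 < μ (Ae ∩ B) := by
    rwa [← measure_congr hSeq]
  have haNe : μ Ae ≠ 0 := fun h => by simp [hmul, h] at hpos
  have hbNe : μ B ≠ 0 := fun h => by simp [hmul, h] at hpos
  -- integral over Ae ∩ B equals μ Ae * integral over B
  have hf : Integrable (fun ω => Y1 ω - Y0 ω) μ := hY1.sub hY0
  have key : ∫ ω in Ae ∩ B, (Y1 ω - Y0 ω) ∂μ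
      = (μ Ae).toReal * ∫ ω in B, (Y1 ω - Y0 ω) ∂μ := by
    have hX : (fun ω => Set.indicator Ae (fun _ => (1:ℝ)) ω) =
        (fun b : Bool => if b = true then (1:ℝ) else 0) ∘ A := by
      funext ω; by_cases h : A ω = true <;> simp [hAe, Set.indicator, h]
    have hYf : (fun ω => Set.indicator B (fun ω => Y1 ω - Y0 ω) ω) =
        (fun p : ℝ × ℝ × Bool × Bool => if p.2.2.2 = true then p.1 - p.2.1 else 0) ∘
          (fun ω => (Y1 ω, Y0 ω, D0 ω, D1 ω)) := by
      funext ω; by_cases h : D1 ω = true <;> simp [hB, Set.indicator, h]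
    have hind : IndepFun (fun ω => Set.indicator Ae (fun _ => (1:ℝ)) ω)
        (fun ω => Set.indicator B (fun ω => Y1 ω - Y0 ω) ω) μ := by
      rw [hX, hYf]
      exact hindep.comp (measurable_from_top)
        (Measurable.ite (measurable_snd.snd.snd (measurableSet_singleton true))
          (measurable_fst.sub measurable_snd.fst) measurable_const)
    have := hind.integral_fun_mul_eq_mul_integral
      ((integrable_const (1:ℝ)).indicator (hA (measurableSet_singleton true))).aestronglyMeasurable
      (hf.indicator (hD1 (measurableSet_singleton true))).aestronglyMeasurable
    have hAeM : MeasurableSet Ae := hA (measurableSet_singleton true)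
    have hBM : MeasurableSet B := hD1 (measurableSet_singleton true)
    have e1 : ∫ ω, Set.indicator Ae (fun _ => (1:ℝ)) ω *
        Set.indicator B (fun ω => Y1 ω - Y0 ω) ω ∂μ
        = ∫ ω in Ae ∩ B, (Y1 ω - Y0 ω) ∂μ := by
      rw [← integral_indicator (hAeM.inter hBM)]
      congr 1
      funext ω
      by_cases h1 : ω ∈ Ae <;> by_cases h2 : ω ∈ B <;>
        simp [Set.indicator, h1, h2]
    have e2 : ∫ ω, Set.indicator Ae (fun _ => (1:ℝ)) ω ∂μ = (μ Ae).toReal := by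
      rw [integral_indicator hAeM]; simp [Measure.real]
    have e3 : ∫ ω, Set.indicator B (fun ω => Y1 ω - Y0 ω) ω ∂μ
        = ∫ ω in B, (Y1 ω - Y0 ω) ∂μ := integral_indicator hBM
    rw [e2, e3] at this
    rw [← e1]
    exact this
  -- now compute both sides
  have hcond_int : ∀ (s : Set Ω), ∫ ω, (Y1 ω - Y0 ω) ∂(μ[|s])
      = (μ s).toReal⁻¹ * ∫ ω in s, (Y1 ω - Y0 ω) ∂μ := by
    intro s
    rw [ProbabilityTheory.cond, integral_smul_measure, ENNReal.toReal_inv, smul_eq_mul]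
  rw [hcond_int, hcond_int, key, hmul, ENNReal.toReal_mul]
  have ha : (μ Ae).toReal ≠ 0 := ENNReal.toReal_ne_zero.2 ⟨haNe, measure_ne_top μ _⟩
  have hb : (μ B).toReal ≠ 0 := ENNReal.toReal_ne_zero.2 ⟨hbNe, measure_ne_top μ _⟩
  field_simp
end

section
/- The intention-to-treat effect equals the LATE times the complier share: under no defiers and independence of A from (Y(1), Y(0), D(0), D(1)) with P(A=1) ∈ (0,1), E[Y | A=1] − E[Y | A=0] = E[Y(1) − Y(0) | C] · P(C), where Y = Y(1)D + Y(0)(1−D) and D = D(1)A + D(0)(1−A), assuming P(C) > 0. -/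
open MeasureTheory ProbabilityTheory

lemma stmt11_ite_int {Ω : Type*} [MeasurableSpace Ω] {μ : Measure Ω} {b : Ω → Bool}
    {f g : Ω → ℝ} (hb : Measurable b) (hf : Integrable f μ) (hg : Integrable g μ) :
    Integrable (fun ω => if b ω then f ω else g ω) μ := by
  have h : (fun ω => if b ω then f ω else g ω)
      = (b ⁻¹' {true}).indicator f + ((b ⁻¹' {true})ᶜ).indicator g := by
    funext ω
    by_cases h : b ω <;> simp [Set.indicator, h]
  rw [h]
  exact (hf.indicator (hb (measurableSet_singleton true))).add
    (hg.indicator (hb (measurableSet_singleton true)).compl)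

lemma stmt11_helper {Ω : Type*} [MeasurableSpace Ω] {μ : Measure Ω} [IsProbabilityMeasure μ]
    {A : Ω → Bool} {g : Ω → ℝ} (hA : Measurable A) (hg : Integrable g μ) (c : Bool)
    (hindep : IndepFun (fun ω => if A ω = c then (1:ℝ) else 0) g μ) :
    ∫ ω in {ω | A ω = c}, g ω ∂μ = (μ {ω | A ω = c}).toReal * ∫ ω, g ω ∂μ := by
  have hs : MeasurableSet {ω | A ω = c} := hA (measurableSet_singleton c)
  have hind : (fun ω => if A ω = c then (1:ℝ) else 0)
      = Set.indicator {ω | A ω = c} (fun _ => (1:ℝ)) := by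
    funext ω; by_cases h : A ω = c <;> simp [Set.indicator, h]
  have h1 : Integrable (fun ω => if A ω = c then (1:ℝ) else 0) μ := by
    rw [hind]; exact (integrable_const 1).indicator hs
  have hmul := hindep.integral_mul_eq_mul_integral h1.1 hg.1
  have h2 : ((fun ω => if A ω = c then (1:ℝ) else 0) * g)
      = Set.indicator {ω | A ω = c} g := by
    funext ω; by_cases h : A ω = c <;> simp [Set.indicator, h]
  rw [h2, hind] at hmul
  rw [integral_indicator hs, integral_indicator hs] at hmul
  simp only [setIntegral_const, smul_eq_mul, mul_one] at hmul
  exact hmul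

theorem stmt11 {Ω : Type*} [MeasurableSpace Ω] (μ : Measure Ω) [IsProbabilityMeasure μ]
    (A D0 D1 : Ω → Bool) (Y1 Y0 : Ω → ℝ)
    (hA : Measurable A) (hD0 : Measurable D0) (hD1 : Measurable D1)
    (hY1 : Integrable Y1 μ) (hY0 : Integrable Y0 μ)
    (hindep : IndepFun A (fun ω => (Y1 ω, Y0 ω, D0 ω, D1 ω)) μ)
    (hdef : μ {ω | D0 ω = true ∧ D1 ω = false} = 0)
    (hA1 : 0 < μ {ω | A ω = true}) (hA2 : μ {ω | A ω = true} < 1)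
    (hCpos : 0 < μ {ω | D0 ω = false ∧ D1 ω = true}) :
    (∫ ω, (if (if A ω then D1 ω else D0 ω) then Y1 ω else Y0 ω)
        ∂(μ[|{ω | A ω = true}]))
      - (∫ ω, (if (if A ω then D1 ω else D0 ω) then Y1 ω else Y0 ω)
          ∂(μ[|{ω | A ω = false}]))
      = (∫ ω, (Y1 ω - Y0 ω) ∂(μ[|{ω | D0 ω = false ∧ D1 ω = true}]))
          * (μ {ω | D0 ω = false ∧ D1 ω = true}).toReal := by
  set C : Set Ω := {ω | D0 ω = false ∧ D1 ω = true} with hC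
  have hCmeas : MeasurableSet C := by
    have : C = D0 ⁻¹' {false} ∩ D1 ⁻¹' {true} := by
      ext ω; simp [hC]
    rw [this]
    exact (hD0 (measurableSet_singleton false)).inter (hD1 (measurableSet_singleton true))
  have hAt : MeasurableSet {ω | A ω = true} := hA (measurableSet_singleton true)
  have hAf : MeasurableSet {ω | A ω = false} := hA (measurableSet_singleton false)
  set g1 : Ω → ℝ := fun ω => if D1 ω then Y1 ω else Y0 ω with hg1
  set g0 : Ω → ℝ := fun ω => if D0 ω then Y1 ω else Y0 ω with hg0
  have hg1i : Integrable g1 μ := stmt11_ite_int hD1 hY1 hY0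
  have hg0i : Integrable g0 μ := stmt11_ite_int hD0 hY1 hY0
  -- independence compositions
  have hcomp : ∀ c : Bool, ∀ ψ : ℝ × ℝ × Bool × Bool → ℝ, Measurable ψ →
      IndepFun (fun ω => if A ω = c then (1:ℝ) else 0)
        (fun ω => ψ (Y1 ω, Y0 ω, D0 ω, D1 ω)) μ := by
    intro c ψ hψ
    have hφ : Measurable (fun b : Bool => if b = c then (1:ℝ) else 0) :=
      measurable_from_top
    exact hindep.comp hφ hψ
  have hψ1 : Measurable (fun p : ℝ × ℝ × Bool × Bool => if p.2.2.2 then p.1 else p.2.1) := by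
    have hc : MeasurableSet {p : ℝ × ℝ × Bool × Bool | p.2.2.2 = true} :=
      (measurable_snd.comp (measurable_snd.comp measurable_snd)) (measurableSet_singleton true)
    exact Measurable.ite hc measurable_fst (measurable_fst.comp measurable_snd)
  have hψ0 : Measurable (fun p : ℝ × ℝ × Bool × Bool => if p.2.2.1 then p.1 else p.2.1) := by
    have hc : MeasurableSet {p : ℝ × ℝ × Bool × Bool | p.2.2.1 = true} :=
      (measurable_fst.comp (measurable_snd.comp measurable_snd)) (measurableSet_singleton true)
    exact Measurable.ite hc measurable_fst (measurable_fst.comp measurable_snd)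
  -- the two set integrals
  have hkey1 : ∫ ω in {ω | A ω = true},
      (if (if A ω then D1 ω else D0 ω) then Y1 ω else Y0 ω) ∂μ
      = (μ {ω | A ω = true}).toReal * ∫ ω, g1 ω ∂μ := by
    rw [setIntegral_congr_fun hAt (g := g1) (fun ω hω => by
      simp only [Set.mem_setOf_eq] at hω; simp [hg1, hω])]
    exact stmt11_helper hA hg1i true (hcomp true _ hψ1)
  have hkey0 : ∫ ω in {ω | A ω = false},
      (if (if A ω then D1 ω else D0 ω) then Y1 ω else Y0 ω) ∂μ
      = (μ {ω | A ω = false}).toReal * ∫ ω, g0 ω ∂μ := by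
    rw [setIntegral_congr_fun hAf (g := g0) (fun ω hω => by
      simp only [Set.mem_setOf_eq] at hω; simp [hg0, hω])]
    exact stmt11_helper hA hg0i false (hcomp false _ hψ0)
  -- positivity facts
  have hfin : μ {ω | A ω = true} ≠ ⊤ := (measure_lt_top μ _).ne
  have hAtne : (μ {ω | A ω = true}).toReal ≠ 0 := by
    simp [ENNReal.toReal_ne_zero, hA1.ne', hfin]
  have hAfalse : μ {ω | A ω = false} = 1 - μ {ω | A ω = true} := by
    have hcompl : {ω | A ω = false} = {ω | A ω = true}ᶜ := by
      ext ω; simp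
    rw [hcompl, measure_compl hAt hfin, measure_univ]
  have hAfpos : 0 < μ {ω | A ω = false} := by
    rw [hAfalse]
    exact tsub_pos_of_lt hA2
  have hAfne : (μ {ω | A ω = false}).toReal ≠ 0 := by
    simp [ENNReal.toReal_ne_zero, hAfpos.ne', (measure_lt_top μ _).ne]
  have hCne : (μ C).toReal ≠ 0 := by
    simp [ENNReal.toReal_ne_zero, hCpos.ne', (measure_lt_top μ _).ne]
  -- rewrite conditional integrals
  have hcond : ∀ (s : Set Ω) (f : Ω → ℝ),
      ∫ ω, f ω ∂(μ[|s]) = (μ s).toReal⁻¹ * ∫ ω in s, f ω ∂μ := by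
    intro s f
    rw [ProbabilityTheory.cond, integral_smul_measure, ENNReal.toReal_inv, smul_eq_mul]
  rw [hcond, hcond, hcond, hkey1, hkey0]
  rw [inv_mul_cancel_left₀ hAtne, inv_mul_cancel_left₀ hAfne]
  rw [inv_mul_eq_div, div_mul_cancel₀ _ hCne]
  -- now: ∫ g1 - ∫ g0 = ∫ in C, (Y1 - Y0)
  rw [← integral_sub hg1i hg0i]
  have hae : (fun ω => g1 ω - g0 ω) =ᵐ[μ] C.indicator (fun ω => Y1 ω - Y0 ω) := by
    rw [Filter.EventuallyEq, ae_iff]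
    refine measure_mono_null (fun ω hω => ?_) hdef
    simp only [Set.mem_setOf_eq] at hω ⊢
    rcases Bool.eq_false_or_eq_true (D0 ω) with h0 | h0 <;>
      rcases Bool.eq_false_or_eq_true (D1 ω) with h1 | h1
    all_goals first
      | exact ⟨h0, h1⟩
      | exact absurd (by simp [hg1, hg0, Set.indicator_apply, hC, h0, h1]) hω
  rw [integral_congr_ae hae, integral_indicator hCmeas]
end

section
/- Under no defiers, independence of A from (Y(1),Y(0),D(0),D(1)) conditional on S = s, P(A=1|S=s) ∈ (0,1), and π_{D(1)}(s) − π_{D(0)}(s) > 0, the stratum-level Wald ratio identifies the stratum LATE: (E[Y | A=1, S=s] − E[Y | A=0, S=s]) / (E[D | A=1, S=s] − E[D | A=0, S=s]) = E[Y(1) − Y(0) | C, S=s]. -/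
open MeasureTheory ProbabilityTheory

section Aux

variable {Ω : Type*} [MeasurableSpace Ω] (ν : Measure Ω)

lemma aux_integral_cond_congr {E : Set Ω} (hE : MeasurableSet E) {f g : Ω → ℝ}
    (h : ∀ ω ∈ E, f ω = g ω) : ∫ ω, f ω ∂ν[|E] = ∫ ω, g ω ∂ν[|E] := by
  simp only [ProbabilityTheory.cond, integral_smul_measure]
  congr 1
  exact setIntegral_congr_fun hE h

lemma aux_integral_cond_indep [IsProbabilityMeasure ν] {A : Ω → Bool} (hA : Measurable A)
    (b : Bool) (hpos : ν {ω | A ω = b} ≠ 0) {f : Ω → ℝ} (hf : Integrable f ν)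
    (hAf : IndepFun A f ν) :
    ∫ ω, f ω ∂ν[|{ω | A ω = b}] = ∫ ω, f ω ∂ν := by
  have hEm : MeasurableSet {ω | A ω = b} := hA (measurableSet_singleton b)
  have hind : IndepFun (fun ω => if A ω = b then (1 : ℝ) else 0) f ν := by
    have : Measurable (fun c : Bool => if c = b then (1 : ℝ) else 0) := by
      exact Measurable.of_discrete
    exact hAf.comp this measurable_id
  have hI : Integrable (fun ω => if A ω = b then (1 : ℝ) else 0) ν := by
    have : (fun ω => if A ω = b then (1 : ℝ) else 0)
        = ({ω | A ω = b}).indicator (fun _ => (1 : ℝ)) := by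
      funext ω; by_cases h : A ω = b <;> simp [Set.indicator_apply, h]
    rw [this]
    exact (integrable_const (1 : ℝ)).indicator hEm
  have hmul := hind.integral_mul_eq_mul_integral hI.aestronglyMeasurable hf.aestronglyMeasurable
  have h1 : ∫ ω, (if A ω = b then (1 : ℝ) else 0) ∂ν = (ν {ω | A ω = b}).toReal := by
    have : (fun ω => if A ω = b then (1 : ℝ) else 0)
        = ({ω | A ω = b}).indicator (fun _ => (1 : ℝ)) := by
      funext ω; by_cases h : A ω = b <;> simp [Set.indicator_apply, h]
    rw [this, integral_indicator_const _ hEm]; simp; rfl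
  have h2 : ∫ ω in {ω | A ω = b}, f ω ∂ν
      = (ν {ω | A ω = b}).toReal * ∫ ω, f ω ∂ν := by
    rw [← integral_indicator hEm, ← h1, ← hmul]
    congr 1; funext ω
    by_cases h : A ω = b <;> simp [Set.indicator_apply, h]
  have hne : (ν {ω | A ω = b}).toReal ≠ 0 := by
    simp [ENNReal.toReal_ne_zero, hpos, measure_ne_top]
  simp only [ProbabilityTheory.cond, integral_smul_measure, h2, ENNReal.toReal_inv, smul_eq_mul]
  field_simp

end Aux

theorem stmt12 {Ω : Type*} [MeasurableSpace Ω] (μ : Measure Ω) [IsProbabilityMeasure μ]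
    (A D0 D1 : Ω → Bool) (Y1 Y0 : Ω → ℝ) (Ss : Set Ω)
    (hA : Measurable A) (hD0 : Measurable D0) (hD1 : Measurable D1)
    (hSs : MeasurableSet Ss) (hSpos : 0 < μ Ss)
    (hY1 : Integrable Y1 μ) (hY0 : Integrable Y0 μ)
    (hindep : IndepFun A (fun ω => (Y1 ω, Y0 ω, D0 ω, D1 ω)) (μ[|Ss]))
    (hdef : μ[|Ss] {ω | D0 ω = true ∧ D1 ω = false} = 0)
    (hA1 : 0 < (μ[|Ss] {ω | A ω = true}).toReal)
    (hA2 : (μ[|Ss] {ω | A ω = true}).toReal < 1)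
    (hπ : 0 < (μ[|Ss] {ω | D1 ω = true}).toReal
            - (μ[|Ss] {ω | D0 ω = true}).toReal) :
    ((∫ ω, (if (if A ω then D1 ω else D0 ω) then Y1 ω else Y0 ω)
          ∂(μ[|{ω | A ω = true} ∩ Ss]))
      - ∫ ω, (if (if A ω then D1 ω else D0 ω) then Y1 ω else Y0 ω)
          ∂(μ[|{ω | A ω = false} ∩ Ss]))
    / ((∫ ω, (if (if A ω then D1 ω else D0 ω) then (1 : ℝ) else 0)
          ∂(μ[|{ω | A ω = true} ∩ Ss]))
      - ∫ ω, (if (if A ω then D1 ω else D0 ω) then (1 : ℝ) else 0)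
          ∂(μ[|{ω | A ω = false} ∩ Ss]))
    = ∫ ω, (Y1 ω - Y0 ω) ∂(μ[|{ω | D0 ω = false ∧ D1 ω = true} ∩ Ss]) := by
  set ν := μ[|Ss] with hν
  haveI : IsProbabilityMeasure ν := cond_isProbabilityMeasure hSpos.ne'
  -- measurability of basic sets
  have hAt : MeasurableSet {ω | A ω = true} := hA (measurableSet_singleton true)
  have hAf : MeasurableSet {ω | A ω = false} := hA (measurableSet_singleton false)
  have hD1t : MeasurableSet {ω | D1 ω = true} := hD1 (measurableSet_singleton true)
  have hD0t : MeasurableSet {ω | D0 ω = true} := hD0 (measurableSet_singleton true)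
  have hCm : MeasurableSet {ω | D0 ω = false ∧ D1 ω = true} :=
    (hD0 (measurableSet_singleton false)).inter hD1t
  -- rewrite the conditional measures
  have hcond : ∀ (E : Set Ω), MeasurableSet E → μ[|E ∩ Ss] = ν[|E] := by
    intro E hE
    rw [Set.inter_comm, hν, cond_cond_eq_cond_inter hSs hE]
  -- integrability under ν
  have hY1ν : Integrable Y1 ν := (hY1.restrict).smul_measure (by simp [hSpos.ne'])
  have hY0ν : Integrable Y0 ν := (hY0.restrict).smul_measure (by simp [hSpos.ne'])
  set Yt : Ω → ℝ := fun ω => if D1 ω then Y1 ω else Y0 ω with hYt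
  set Yf : Ω → ℝ := fun ω => if D0 ω then Y1 ω else Y0 ω with hYf
  have hsplit : ∀ (D : Ω → Bool), (fun ω => if D ω then Y1 ω else Y0 ω)
      = fun ω => ({ω | D ω = true}).indicator Y1 ω + ({ω | D ω = false}).indicator Y0 ω := by
    intro D; funext ω; cases h : D ω <;> simp [Set.indicator_apply, h]
  have hYtI : Integrable Yt ν := by
    rw [hYt, hsplit D1]
    exact (hY1ν.indicator hD1t).add (hY0ν.indicator (hD1 (measurableSet_singleton false)))
  have hYfI : Integrable Yf ν := by
    rw [hYf, hsplit D0]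
    exact (hY1ν.indicator hD0t).add (hY0ν.indicator (hD0 (measurableSet_singleton false)))
  -- independence of A with the relevant composed functions
  have hcomp : ∀ (φ : ℝ × ℝ × Bool × Bool → ℝ), Measurable φ →
      IndepFun A (fun ω => φ (Y1 ω, Y0 ω, D0 ω, D1 ω)) ν := by
    intro φ hφ
    exact hindep.comp measurable_id hφ
  have hm4 : Measurable (fun p : ℝ × ℝ × Bool × Bool => p.2.2.2) :=
    measurable_snd.comp (measurable_snd.comp measurable_snd)
  have hm3 : Measurable (fun p : ℝ × ℝ × Bool × Bool => p.2.2.1) :=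
    measurable_fst.comp (measurable_snd.comp measurable_snd)
  have hmYt : IndepFun A Yt ν := by
    have := hcomp (fun p => if p.2.2.2 then p.1 else p.2.1)
      (Measurable.ite (hm4 (measurableSet_singleton true)) measurable_fst
        (measurable_fst.comp measurable_snd))
    exact this
  have hmYf : IndepFun A Yf ν := by
    have := hcomp (fun p => if p.2.2.1 then p.1 else p.2.1)
      (Measurable.ite (hm3 (measurableSet_singleton true)) measurable_fst
        (measurable_fst.comp measurable_snd))
    exact this
  set Gt : Ω → ℝ := fun ω => if D1 ω then (1 : ℝ) else 0 with hGt
  set Gf : Ω → ℝ := fun ω => if D0 ω then (1 : ℝ) else 0 with hGf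
  have hGind : ∀ (c : Ω → Bool), Set.indicator {ω | c ω = true} (fun _ => (1:ℝ))
      = fun ω => if c ω then (1:ℝ) else 0 := by
    intro c; funext ω; cases h : c ω <;> simp [Set.indicator_apply, h]
  have hGtI : Integrable Gt ν := by
    rw [hGt, ← hGind D1]; exact (integrable_const (1:ℝ)).indicator hD1t
  have hGfI : Integrable Gf ν := by
    rw [hGf, ← hGind D0]; exact (integrable_const (1:ℝ)).indicator hD0t
  have hmGt : IndepFun A Gt ν :=
    hcomp (fun p => if p.2.2.2 then (1:ℝ) else 0)
      (Measurable.ite (hm4 (measurableSet_singleton true)) measurable_const measurable_const)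
  have hmGf : IndepFun A Gf ν :=
    hcomp (fun p => if p.2.2.1 then (1:ℝ) else 0)
      (Measurable.ite (hm3 (measurableSet_singleton true)) measurable_const measurable_const)
  -- positivity of conditioning events
  have hνAt : ν {ω | A ω = true} ≠ 0 := by
    intro h; rw [h] at hA1; norm_num at hA1
  have hνAf : ν {ω | A ω = false} ≠ 0 := by
    intro h
    have hcompl : {ω | A ω = false} = {ω | A ω = true}ᶜ := by
      ext ω; cases h : A ω <;> simp [h]
    rw [hcompl, prob_compl_eq_zero_iff hAt] at h
    rw [h] at hA2; norm_num at hA2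
  -- compute the four integrals
  have key : ∀ (f : Ω → ℝ) (b : Bool) (g : Ω → ℝ), Integrable g ν → IndepFun A g ν →
      (∀ ω, A ω = b → f ω = g ω) → ν {ω | A ω = b} ≠ 0 →
      ∫ ω, f ω ∂(μ[|{ω | A ω = b} ∩ Ss]) = ∫ ω, g ω ∂ν := by
    intro f b g hg hind hfg hne
    rw [hcond {ω | A ω = b} (hA (measurableSet_singleton b)),
      aux_integral_cond_congr ν (show MeasurableSet {ω | A ω = b} from hA (measurableSet_singleton b)) (fun ω hω => hfg ω hω)]
    exact aux_integral_cond_indep ν hA b hne hg hind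
  have e1 : ∫ ω, (if (if A ω then D1 ω else D0 ω) then Y1 ω else Y0 ω)
        ∂(μ[|{ω | A ω = true} ∩ Ss]) = ∫ ω, Yt ω ∂ν :=
    key _ true Yt hYtI hmYt (fun ω hω => by simp [hω, hYt]) hνAt
  have e2 : ∫ ω, (if (if A ω then D1 ω else D0 ω) then Y1 ω else Y0 ω)
        ∂(μ[|{ω | A ω = false} ∩ Ss]) = ∫ ω, Yf ω ∂ν :=
    key _ false Yf hYfI hmYf (fun ω hω => by simp [hω, hYf]) hνAf
  have e3 : ∫ ω, (if (if A ω then D1 ω else D0 ω) then (1:ℝ) else 0)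
        ∂(μ[|{ω | A ω = true} ∩ Ss]) = ∫ ω, Gt ω ∂ν :=
    key _ true Gt hGtI hmGt (fun ω hω => by simp [hω, hGt]) hνAt
  have e4 : ∫ ω, (if (if A ω then D1 ω else D0 ω) then (1:ℝ) else 0)
        ∂(μ[|{ω | A ω = false} ∩ Ss]) = ∫ ω, Gf ω ∂ν :=
    key _ false Gf hGfI hmGf (fun ω hω => by simp [hω, hGf]) hνAf
  -- the no-defier a.e. statement
  have hae : ∀ᵐ ω ∂ν, ¬(D0 ω = true ∧ D1 ω = false) := by
    rw [ae_iff]; simpa using hdef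
  set C : Set Ω := {ω | D0 ω = false ∧ D1 ω = true} with hC
  -- numerator
  have hnum : ∫ ω, Yt ω ∂ν - ∫ ω, Yf ω ∂ν = ∫ ω in C, (Y1 ω - Y0 ω) ∂ν := by
    rw [← integral_sub hYtI hYfI, ← integral_indicator hCm]
    apply integral_congr_ae
    filter_upwards [hae] with ω hω
    rcases h0 : D0 ω <;> rcases h1 : D1 ω
    · simp [hYt, hYf, hC, Set.indicator_apply, Set.mem_setOf_eq, h0, h1]
    · simp [hYt, hYf, hC, Set.indicator_apply, Set.mem_setOf_eq, h0, h1]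
    · exact absurd ⟨h0, h1⟩ hω
    · simp [hYt, hYf, hC, Set.indicator_apply, Set.mem_setOf_eq, h0, h1]
  -- denominator
  have hden : ∫ ω, Gt ω ∂ν - ∫ ω, Gf ω ∂ν = (ν C).toReal := by
    rw [← integral_sub hGtI hGfI]
    have : ∫ ω, (Gt ω - Gf ω) ∂ν = ∫ ω, C.indicator (fun _ => (1:ℝ)) ω ∂ν := by
      apply integral_congr_ae
      filter_upwards [hae] with ω hω
      rcases h0 : D0 ω <;> rcases h1 : D1 ω
      · simp [hGt, hGf, hC, Set.indicator_apply, Set.mem_setOf_eq, h0, h1]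
      · simp [hGt, hGf, hC, Set.indicator_apply, Set.mem_setOf_eq, h0, h1]
      · exact absurd ⟨h0, h1⟩ hω
      · simp [hGt, hGf, hC, Set.indicator_apply, Set.mem_setOf_eq, h0, h1]
    rw [this, integral_indicator_const _ hCm]; simp; rfl
  have hdenval : ∫ ω, Gt ω ∂ν - ∫ ω, Gf ω ∂ν
      = (ν {ω | D1 ω = true}).toReal - (ν {ω | D0 ω = true}).toReal := by
    congr 1
    · rw [hGt, ← hGind D1, integral_indicator_const _ hD1t]; simp; rfl
    · rw [hGf, ← hGind D0, integral_indicator_const _ hD0t]; simp; rfl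
  have hCpos : (ν C).toReal ≠ 0 := by
    rw [← hden, hdenval]; exact hπ.ne'
  -- right-hand side
  have hrhs : ∫ ω, (Y1 ω - Y0 ω) ∂(μ[|C ∩ Ss])
      = (ν C).toReal⁻¹ * ∫ ω in C, (Y1 ω - Y0 ω) ∂ν := by
    rw [hcond C hCm]
    simp [ProbabilityTheory.cond, integral_smul_measure, ENNReal.toReal_inv]
  rw [e1, e2, e3, e4, hnum, hden, hrhs, div_eq_inv_mul]
end
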